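/- Let f be a non-negative measurable function on 𝒳 and X an 𝒳-valued random variable with m_f = E f(X) and Var(f(X)) ≤ v. Let α > 0 satisfy α²v ≤ 1 and let μ̄_f be the unique zero of the non-increasing function μ ↦ r̄_f(μ). Then m_f − αv ≤ μ̄_f ≤ m_f + αv. -/

import Mathlib

open MeasureTheory ProbabilityTheory Real

noncomputable section

/-- Catoni's truncation function `φ`. -/
def catoniPhi (x : ℝ) : ℝ :=
  if x < 0 then -Real.log (1 - x + x ^ 2 / 2) else Real.log (1 + x + x ^ 2 / 2)

/-- Catoni's empirical criterion `r̂_f(μ)` based on the sample `Xs`. -/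
def rhat {Ω 𝒳 : Type*} (n : ℕ) (α : ℝ) (Xs : Fin n → Ω → 𝒳)
    (f : 𝒳 → ℝ) (μ : ℝ) (ω : Ω) : ℝ :=
  (1 / (n * α)) * ∑ l, catoniPhi (α * (f (Xs l ω) - μ))

/-- The deterministic counterpart `r̄_f(μ)` of Catoni's criterion. -/
def rbar {Ω 𝒳 : Type*} [MeasurableSpace Ω] (P : Measure Ω)
    (α : ℝ) (X : Ω → 𝒳) (f : 𝒳 → ℝ) (μ : ℝ) : ℝ :=
  (1 / α) * ∫ ω, catoniPhi (α * (f (X ω) - μ)) ∂P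

lemma one_sub_aux_pos (x : ℝ) : 0 < 1 - x + x ^ 2 / 2 := by nlinarith [sq_nonneg (x - 1)]

lemma one_add_aux_pos (x : ℝ) : 0 < 1 + x + x ^ 2 / 2 := by nlinarith [sq_nonneg (x + 1)]

lemma catoniPhi_le (x : ℝ) : catoniPhi x ≤ x + x ^ 2 / 2 := by
  unfold catoniPhi
  split_ifs with h
  · have hy : 0 < 1 - x + x ^ 2 / 2 := one_sub_aux_pos x
    have h1 := Real.one_sub_inv_le_log_of_pos hy
    have h2 : (1 - x + x ^ 2 / 2)⁻¹ * (1 - x + x ^ 2 / 2) = 1 := inv_mul_cancel₀ hy.ne'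
    have h3 : (1 - x + x ^ 2 / 2)⁻¹ ≤ 1 + x + x ^ 2 / 2 := by
      nlinarith [sq_nonneg (x ^ 2), inv_pos.2 hy]
    linarith
  · have hy : 0 < 1 + x + x ^ 2 / 2 := one_add_aux_pos x
    have := Real.log_le_sub_one_of_pos hy
    linarith

lemma le_catoniPhi (x : ℝ) : x - x ^ 2 / 2 ≤ catoniPhi x := by
  unfold catoniPhi
  split_ifs with h
  · have hy : 0 < 1 - x + x ^ 2 / 2 := one_sub_aux_pos x
    have := Real.log_le_sub_one_of_pos hy
    linarith
  · have hy : 0 < 1 + x + x ^ 2 / 2 := one_add_aux_pos x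
    have h1 := Real.one_sub_inv_le_log_of_pos hy
    have h2 : (1 + x + x ^ 2 / 2)⁻¹ * (1 + x + x ^ 2 / 2) = 1 := inv_mul_cancel₀ hy.ne'
    have h3 : (1 + x + x ^ 2 / 2)⁻¹ ≤ 1 - x + x ^ 2 / 2 := by
      nlinarith [sq_nonneg (x ^ 2), inv_pos.2 hy]
    linarith

lemma catoniPhi_mono : Monotone catoniPhi := by
  intro a b hab
  unfold catoniPhi
  split_ifs with ha hb hb
  · have : 1 - b + b ^ 2 / 2 ≤ 1 - a + a ^ 2 / 2 := by nlinarith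
    have := Real.log_le_log (one_sub_aux_pos b) this
    linarith
  · have h1 : 0 ≤ Real.log (1 - a + a ^ 2 / 2) :=
      Real.log_nonneg (by nlinarith)
    have h2 : 0 ≤ Real.log (1 + b + b ^ 2 / 2) :=
      Real.log_nonneg (by push_neg at hb; nlinarith)
    linarith
  · push_neg at ha; linarith
  · push_neg at ha
    have : 1 + a + a ^ 2 / 2 ≤ 1 + b + b ^ 2 / 2 := by nlinarith
    exact Real.log_le_log (one_add_aux_pos a) this

lemma catoniPhi_measurable : Measurable catoniPhi := by
  unfold catoniPhi
  exact Measurable.ite (measurableSet_lt measurable_id measurable_const)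
    ((Real.measurable_log.comp (by fun_prop)).neg)
    (Real.measurable_log.comp (by fun_prop))

/-- Lemma 3.1 (second part): the unique zero `μ̄_f` of `r̄_f` lies within `α v` of `m_f`. -/
theorem stmt_3 {Ω 𝒳 : Type*} [MeasurableSpace Ω] [MeasurableSpace 𝒳]
    (P : Measure Ω) [IsProbabilityMeasure P]
    (X : Ω → 𝒳) (hX : Measurable X)
    (f : 𝒳 → ℝ) (hfm : Measurable f) (hf0 : ∀ x, 0 ≤ f x)
    (hfL2 : MemLp (fun ω => f (X ω)) 2 P)
    (v : ℝ) (hv : variance (fun ω => f (X ω)) P ≤ v)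
    (α : ℝ) (hα : 0 < α) (hαv : α ^ 2 * v ≤ 1)
    (μbar : ℝ) (hroot : rbar P α X f μbar = 0)
    (huniq : ∀ μ, rbar P α X f μ = 0 → μ = μbar) :
    (∫ ω, f (X ω) ∂P) - α * v ≤ μbar ∧ μbar ≤ (∫ ω, f (X ω) ∂P) + α * v := by
  set m : ℝ := ∫ ω, f (X ω) ∂P with hm
  set V : ℝ := variance (fun ω => f (X ω)) P with hV
  have hYmeas : Measurable fun ω => f (X ω) := hfm.comp hX
  have hvnn : 0 ≤ v := (variance_nonneg _ _).trans hv
  have hYint : Integrable (fun ω => f (X ω)) P := hfL2.integrable one_le_two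
  have hZmem : ∀ μ : ℝ, MemLp (fun ω => f (X ω) - μ) 2 P := fun μ => hfL2.sub (memLp_const μ)
  have hZint : ∀ μ : ℝ, Integrable (fun ω => f (X ω) - μ) P :=
    fun μ => (hZmem μ).integrable one_le_two
  have hZsq : ∀ μ : ℝ, Integrable (fun ω => (f (X ω) - μ) ^ 2) P :=
    fun μ => (hZmem μ).integrable_sq
  have hUint : ∀ μ : ℝ,
      Integrable (fun ω => α * (f (X ω) - μ) + α ^ 2 * (f (X ω) - μ) ^ 2 / 2) P :=
    fun μ => ((hZint μ).const_mul α).add (((hZsq μ).const_mul (α ^ 2)).div_const 2)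
  have hLint : ∀ μ : ℝ,
      Integrable (fun ω => α * (f (X ω) - μ) - α ^ 2 * (f (X ω) - μ) ^ 2 / 2) P :=
    fun μ => ((hZint μ).const_mul α).sub (((hZsq μ).const_mul (α ^ 2)).div_const 2)
  have hgint : ∀ μ : ℝ, Integrable (fun ω => catoniPhi (α * (f (X ω) - μ))) P := by
    intro μ
    refine Integrable.mono'
      (((hZint μ).abs.const_mul α).add (((hZsq μ).const_mul (α ^ 2)).div_const 2))
      ((catoniPhi_measurable.comp
        (measurable_const.mul (hYmeas.sub measurable_const))).aestronglyMeasurable)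
      (ae_of_all _ fun ω => ?_)
    have h1 : α * (f (X ω) - μ) ≤ α * |f (X ω) - μ| :=
      mul_le_mul_of_nonneg_left (le_abs_self _) hα.le
    have h2 : α * (-|f (X ω) - μ|) ≤ α * (f (X ω) - μ) :=
      mul_le_mul_of_nonneg_left (neg_abs_le _) hα.le
    have h3 := catoniPhi_le (α * (f (X ω) - μ))
    have h4 := le_catoniPhi (α * (f (X ω) - μ))
    have h5 : (α * (f (X ω) - μ)) ^ 2 = α ^ 2 * (f (X ω) - μ) ^ 2 := by ring
    simp only [Pi.add_apply, Real.norm_eq_abs]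
    rw [abs_le]
    constructor <;> nlinarith
  -- second moment identity
  have hvar : V = (∫ ω, f (X ω) ^ 2 ∂P) - m ^ 2 := by
    rw [hV, variance_eq_sub hfL2]
    congr 1
  have hsum : ∀ μ : ℝ, ∫ ω, (f (X ω) - μ) ^ 2 ∂P = V + (m - μ) ^ 2 := by
    intro μ
    have e1 : ∫ ω, (f (X ω) - μ) ^ 2 ∂P
        = ∫ ω, (f (X ω) ^ 2 - (2 * μ) * f (X ω) + μ ^ 2) ∂P :=
      integral_congr_ae (ae_of_all _ fun ω => by ring)
    have i1 : Integrable (fun ω => f (X ω) ^ 2 - 2 * μ * f (X ω)) P :=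
      (hfL2.integrable_sq).sub (hYint.const_mul (2 * μ))
    have i2 : Integrable (fun ω => 2 * μ * f (X ω)) P := hYint.const_mul (2 * μ)
    rw [e1, integral_add i1 (integrable_const _),
      integral_sub hfL2.integrable_sq i2, integral_const_mul, integral_const]
    simp only [probReal_univ, measure_univ, ENNReal.toReal_one, one_smul]
    rw [← hm, hvar]; ring
  have hIcalc : ∀ μ : ℝ, ∫ ω, (α * (f (X ω) - μ) + α ^ 2 * (f (X ω) - μ) ^ 2 / 2) ∂P
      = α * (m - μ) + α ^ 2 * (V + (m - μ) ^ 2) / 2 := by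
    intro μ
    rw [integral_add ((hZint μ).const_mul α) (((hZsq μ).const_mul (α ^ 2)).div_const 2),
      integral_div, integral_const_mul, integral_const_mul,
      integral_sub hYint (integrable_const _), integral_const, hsum μ]
    simp only [probReal_univ, measure_univ, ENNReal.toReal_one, one_smul]
    rfl
  have hLcalc : ∀ μ : ℝ, ∫ ω, (α * (f (X ω) - μ) - α ^ 2 * (f (X ω) - μ) ^ 2 / 2) ∂P
      = α * (m - μ) - α ^ 2 * (V + (m - μ) ^ 2) / 2 := by
    intro μ
    rw [integral_sub ((hZint μ).const_mul α) (((hZsq μ).const_mul (α ^ 2)).div_const 2),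
      integral_div, integral_const_mul, integral_const_mul,
      integral_sub hYint (integrable_const _), integral_const, hsum μ]
    simp only [probReal_univ, measure_univ, ENNReal.toReal_one, one_smul]
    rfl
  -- monotonicity of rbar
  have hmono : ∀ ⦃μ1 μ2 : ℝ⦄, μ1 ≤ μ2 → rbar P α X f μ2 ≤ rbar P α X f μ1 := by
    intro μ1 μ2 h
    unfold rbar
    refine mul_le_mul_of_nonneg_left ?_ (by positivity)
    refine integral_mono (hgint μ2) (hgint μ1) fun ω => ?_
    exact catoniPhi_mono (by nlinarith)
  have hVle : V ≤ v := hv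
  -- rbar(m + αv) ≤ 0
  have hub : rbar P α X f (m + α * v) ≤ 0 := by
    unfold rbar
    refine mul_nonpos_of_nonneg_of_nonpos (by positivity) ?_
    have h1 : ∫ ω, catoniPhi (α * (f (X ω) - (m + α * v))) ∂P
        ≤ ∫ ω, (α * (f (X ω) - (m + α * v))
            + α ^ 2 * (f (X ω) - (m + α * v)) ^ 2 / 2) ∂P := by
      refine integral_mono (hgint _) (hUint _) fun ω => ?_
      have h3 := catoniPhi_le (α * (f (X ω) - (m + α * v)))
      nlinarith [sq_nonneg (f (X ω) - (m + α * v))]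
    rw [hIcalc] at h1
    have h2 : α * (m - (m + α * v)) + α ^ 2 * (V + (m - (m + α * v)) ^ 2) / 2 ≤ 0 := by
      have hq : 0 ≤ α ^ 2 * v * (1 - α ^ 2 * v) :=
        mul_nonneg (mul_nonneg (sq_nonneg α) hvnn) (by linarith)
      nlinarith [mul_le_mul_of_nonneg_left hVle (sq_nonneg α)]
    linarith
  -- rbar(m - αv) ≥ 0
  have hlb : 0 ≤ rbar P α X f (m - α * v) := by
    unfold rbar
    refine mul_nonneg (by positivity) ?_
    have h1 : ∫ ω, (α * (f (X ω) - (m - α * v))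
            - α ^ 2 * (f (X ω) - (m - α * v)) ^ 2 / 2) ∂P
        ≤ ∫ ω, catoniPhi (α * (f (X ω) - (m - α * v))) ∂P := by
      refine integral_mono (hLint _) (hgint _) fun ω => ?_
      have h4 := le_catoniPhi (α * (f (X ω) - (m - α * v)))
      nlinarith [sq_nonneg (f (X ω) - (m - α * v))]
    rw [hLcalc] at h1
    have h2 : 0 ≤ α * (m - (m - α * v)) - α ^ 2 * (V + (m - (m - α * v)) ^ 2) / 2 := by
      have hq : 0 ≤ α ^ 2 * v * (1 - α ^ 2 * v) :=
        mul_nonneg (mul_nonneg (sq_nonneg α) hvnn) (by linarith)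
      nlinarith [mul_le_mul_of_nonneg_left hVle (sq_nonneg α)]
    linarith
  constructor
  · by_contra h
    push_neg at h
    have h1 : rbar P α X f (m - α * v) ≤ rbar P α X f μbar := hmono h.le
    rw [hroot] at h1
    have h2 : rbar P α X f (m - α * v) = 0 := le_antisymm h1 hlb
    have := huniq _ h2
    linarith
  · by_contra h
    push_neg at h
    have h1 : rbar P α X f μbar ≤ rbar P α X f (m + α * v) := hmono h.le
    rw [hroot] at h1
    have h2 : rbar P α X f (m + α * v) = 0 := le_antisymm hub h1
    have := huniq _ h2
    linarith
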